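/- If q is a primitive N-th root of unity then the element E^N is primitive in the braided Hopf algebra k⟨E⟩ of diagonal type with braiding constant q: Δ(E^N) = E^N ⊗ 1 + 1 ⊗ E^N. -/
import Mathlib

namespace QBinAux

variable {𝕜 : Type*} [Field 𝕜]

/-- Gaussian binomial coefficient, via the q-Pascal recursion. -/
def qc (q : 𝕜) : ℕ → ℕ → 𝕜
  | 0, 0 => 1
  | 0, _+1 => 0
  | _+1, 0 => 1
  | n+1, k+1 => qc q n k + q^(k+1) * qc q n (k+1)

variable (q : 𝕜)

@[simp] lemma qc_zero_right (n : ℕ) : qc q n 0 = 1 := by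
  cases n <;> rfl

lemma qc_eq_zero : ∀ n k : ℕ, n < k → qc q n k = 0
  | 0, k+1, _ => rfl
  | n+1, k+1, h => by
    have h1 : n < k := by omega
    have h2 : n < k+1 := by omega
    simp [qc, qc_eq_zero n k h1, qc_eq_zero n (k+1) h2]

@[simp] lemma qc_diag : ∀ n : ℕ, qc q n n = 1
  | 0 => rfl
  | n+1 => by
    simp [qc, qc_diag n, qc_eq_zero q n (n+1) (by omega)]

lemma qc_one_mul : ∀ n : ℕ, (q - 1) * qc q n 1 = q ^ n - 1
  | 0 => by simp [qc]
  | n+1 => by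
    have ih := qc_one_mul n
    show (q-1) * (qc q n 0 + q^1 * qc q n 1) = q^(n+1) - 1
    rw [qc_zero_right]
    linear_combination q * ih

/-- The second q-Pascal identity. -/
lemma qc_pascal2 : ∀ n k : ℕ, qc q (n+1) (k+1) = qc q n (k+1) + q ^ (n-k) * qc q n k
  | n, 0 => by
    show qc q n 0 + q^1 * qc q n 1 = qc q n 1 + q^(n-0) * qc q n 0
    have h := qc_one_mul q n
    simp only [qc_zero_right, Nat.sub_zero, mul_one]
    linear_combination h
  | n, j+1 => by
    rcases lt_or_ge n (j+1) with h | h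
    · have h1 : n < j + 2 := by omega
      have h2 : n + 1 < j + 2 := by omega
      simp [qc_eq_zero q (n+1) (j+2) h2, qc_eq_zero q n (j+2) h1, qc_eq_zero q n (j+1) h]
    · rcases eq_or_lt_of_le h with he | hlt
      · subst he
        simp [qc_eq_zero q (j+1) (j+2) (by omega), qc_eq_zero q j (j+2) (by omega),
          qc_eq_zero q j (j+1) (by omega), qc]
      · obtain ⟨m, rfl⟩ : ∃ m, n = m + 1 := ⟨n - 1, by omega⟩
        have hj : j + 1 ≤ m := by omega
        have d1 : qc q (m+2) (j+2) = qc q (m+1) (j+1) + q^(j+2) * qc q (m+1) (j+2) := rfl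
        have d2 : qc q (m+1) (j+2) = qc q m (j+1) + q^(j+2) * qc q m (j+2) := rfl
        have d3 : qc q (m+1) (j+1) = qc q m j + q^(j+1) * qc q m (j+1) := rfl
        have i1 := qc_pascal2 m j
        have i2 := qc_pascal2 m (j+1)
        have e1 : q^(j+2) * q^(m-(j+1)) = q^(m+1) := by
          rw [← pow_add]; congr 1; omega
        have e2 : q^(m-j) * q^(j+1) = q^(m+1) := by
          rw [← pow_add]; congr 1; omega
        have e3 : m + 1 - (j + 1) = m - j := by omega
        simp only [e3]
        linear_combination d1 + i1 + q^(j+2) * i2 - d2 - q^(m-j) * d3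
          + qc q m (j+1) * e1 - qc q m (j+1) * e2


/-- Gaussian binomial coefficients vanish at a primitive root of unity. -/
lemma qc_prim {N k : ℕ} (hq : IsPrimitiveRoot q N) (h1 : 0 < k) (h2 : k < N) :
    qc q N k = 0 := by
  obtain ⟨j, rfl⟩ : ∃ j, k = j + 1 := ⟨k - 1, by omega⟩
  obtain ⟨m, rfl⟩ : ∃ m, N = m + 1 := ⟨N - 1, by omega⟩
  have hj : j + 1 ≤ m := by omega
  have d : qc q (m+1) (j+1) = qc q m j + q^(j+1) * qc q m (j+1) := rfl
  have p := qc_pascal2 q m j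
  have hab : (1 - q^(m-j)) * qc q m j = (1 - q^(j+1)) * qc q m (j+1) := by
    linear_combination p - d
  have e : q^(j+1) * q^(m-j) = q^(m+1) := by
    rw [← pow_add]; congr 1; omega
  have key : (1 - q^(m-j)) * qc q (m+1) (j+1) = (1 - q^(m+1)) * qc q m (j+1) := by
    linear_combination (1 - q^(m-j)) * d + hab - qc q m (j+1) * e
  have hN1 : q^(m+1) = 1 := hq.pow_eq_one
  have hne : q^(m-j) ≠ 1 := by
    have := hq.pow_ne_one_of_pos_of_lt (l := m - j) (by omega) (by omega)
    exact this
  have hfac : (1 : 𝕜) - q^(m-j) ≠ 0 := sub_ne_zero.mpr (Ne.symm hne)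
  have : (1 - q^(m-j)) * qc q (m+1) (j+1) = 0 := by rw [key, hN1]; ring
  exact (mul_eq_zero.mp this).resolve_left hfac

section Alg

variable {A : Type*} [Ring A] [Algebra 𝕜 A] (x y : A)

lemma comm_pow (h : y * x = q • (x * y)) : ∀ k : ℕ, y * x^k = q^k • (x^k * y)
  | 0 => by simp
  | k+1 => by
    rw [pow_succ, ← mul_assoc, comm_pow h k, smul_mul_assoc, mul_assoc, h,
      mul_smul_comm, smul_smul, ← mul_assoc, ← pow_succ, pow_succ q]

lemma qbinom (h : y * x = q • (x * y)) :
    ∀ n : ℕ, (x + y)^n = ∑ k ∈ Finset.range (n+1), qc q n k • (x^k * y^(n-k))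
  | 0 => by simp
  | n+1 => by
    have key : ∀ k : ℕ, (x + y) * (qc q n k • (x^k * y^(n-k)))
        = qc q n k • (x^(k+1) * y^(n-k)) + (q^k * qc q n k) • (x^k * y^(n-k+1)) := by
      intro k
      rw [add_mul, mul_smul_comm, mul_smul_comm]
      congr 1
      · rw [← mul_assoc, ← pow_succ']
      · rw [← mul_assoc, comm_pow q x y h k, smul_mul_assoc, smul_smul,
          mul_comm (qc q n k) (q^k), mul_assoc, ← pow_succ']
    calc (x + y)^(n+1)
        = ∑ k ∈ Finset.range (n+1), (x + y) * (qc q n k • (x^k * y^(n-k))) := by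
          rw [pow_succ', qbinom h n, Finset.mul_sum]
      _ = ∑ k ∈ Finset.range (n+1), qc q n k • (x^(k+1) * y^(n-k))
          + ∑ k ∈ Finset.range (n+1), (q^k * qc q n k) • (x^k * y^(n-k+1)) := by
          rw [← Finset.sum_add_distrib]; exact Finset.sum_congr rfl fun k _ => key k
      _ = ∑ k ∈ Finset.range (n+1), qc q n k • (x^(k+1) * y^(n-k))
          + (∑ j ∈ Finset.range n, (q^(j+1) * qc q n (j+1)) • (x^(j+1) * y^(n-(j+1)+1))
             + (q^0 * qc q n 0) • (x^0 * y^(n-0+1))) := by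
          congr 1
          exact Finset.sum_range_succ' _ n
      _ = ∑ k ∈ Finset.range (n+1), qc q n k • (x^(k+1) * y^(n-k))
          + (∑ j ∈ Finset.range n, (q^(j+1) * qc q n (j+1)) • (x^(j+1) * y^(n-j))
             + y^(n+1)) := by
          congr 1
          congr 1
          · exact Finset.sum_congr rfl fun j hj => by
              rw [show n - (j+1) + 1 = n - j by
                have := Finset.mem_range.mp hj; omega]
          · simp
      _ = ∑ k ∈ Finset.range (n+1), qc q n k • (x^(k+1) * y^(n-k))
          + (∑ j ∈ Finset.range (n+1), (q^(j+1) * qc q n (j+1)) • (x^(j+1) * y^(n-j))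
             + y^(n+1)) := by
          congr 2
          rw [Finset.sum_range_succ, qc_eq_zero q n (n+1) (by omega)]
          simp
      _ = ∑ j ∈ Finset.range (n+1),
            (qc q n j • (x^(j+1) * y^(n-j)) + (q^(j+1) * qc q n (j+1)) • (x^(j+1) * y^(n-j)))
          + y^(n+1) := by
          rw [Finset.sum_add_distrib, add_assoc]
      _ = ∑ j ∈ Finset.range (n+1), qc q (n+1) (j+1) • (x^(j+1) * y^(n-j)) + y^(n+1) := by
          refine congrArg (· + y^(n+1)) (Finset.sum_congr rfl fun j _ => ?_)
          rw [← add_smul]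
          rfl
      _ = ∑ k ∈ Finset.range (n+1+1), qc q (n+1) k • (x^k * y^(n+1-k)) := by
          conv_rhs => rw [Finset.sum_range_succ']
          simp [Nat.succ_sub_succ]

theorem main {B : Type*} [Ring B] [Algebra 𝕜 B]
    (N : ℕ) (hq : IsPrimitiveRoot q N) (hN : 1 ≤ N)
    (E : B) (Δ ι₁ ι₂ : B →ₐ[𝕜] A)
    (hprim : Δ E = ι₁ E + ι₂ E)
    (htwist : ι₂ E * ι₁ E = q • (ι₁ E * ι₂ E)) :
    Δ (E ^ N) = ι₁ (E ^ N) + ι₂ (E ^ N) := by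
  rw [map_pow, hprim, qbinom q (ι₁ E) (ι₂ E) htwist N, Finset.sum_range_succ]
  rw [Finset.sum_eq_single 0 (fun k hk hk0 => by
    rw [qc_prim q hq (by omega) (Finset.mem_range.mp hk), zero_smul])
    (by intro h; exact absurd (Finset.mem_range.mpr (by omega)) h)]
  simp [map_pow]
  exact add_comm _ _

end Alg

end QBinAux


/-- If `q` is a primitive `N`-th root of unity, then `E^N` is primitive in the braided Hopf
algebra `k⟨E⟩` of diagonal type with braiding constant `q`:
`Δ(E^N) = E^N ⊗ 1 + 1 ⊗ E^N`.  Here `A` models the braided tensor square with twisted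
multiplication, `ι₁ x = x ⊗ 1`, `ι₂ y = 1 ⊗ y`, so that
`ι₂ E * ι₁ E = q • (ι₁ E * ι₂ E)`, the coproduct `Δ` is an algebra map and `E` is
primitive: `Δ E = ι₁ E + ι₂ E`. -/
theorem pow_primitive_of_primitiveRoot {𝕜 B A : Type*} [Field 𝕜]
    [Ring B] [Algebra 𝕜 B] [Ring A] [Algebra 𝕜 A]
    (q : 𝕜) (N : ℕ) (hq : IsPrimitiveRoot q N) (hN : 1 ≤ N)
    (E : B) (Δ ι₁ ι₂ : B →ₐ[𝕜] A)
    (hprim : Δ E = ι₁ E + ι₂ E)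
    (htwist : ι₂ E * ι₁ E = q • (ι₁ E * ι₂ E)) :
    Δ (E ^ N) = ι₁ (E ^ N) + ι₂ (E ^ N) := by
  exact QBinAux.main q N hq hN E Δ ι₁ ι₂ hprim htwist
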